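/- Let n ≥ 3 and let P ⊆ ℝ² be the regular n-gon with vertices v_j = (cos(2πj/n), sin(2πj/n)) for j = 1, …, n. For i = 1, …, n let a_i = (cos((2i+1)π/n), sin((2i+1)π/n)), so that the facet-defining inequalities of P are ⟨a_i, x⟩ ≤ cos(π/n), and let S be the n×n slack matrix with S_{ij} = cos(π/n) − ⟨a_i, v_j⟩. Then S admits a rank r nonnegative factorization with r ≤ 2⌈log₂ n⌉; consequently the extension complexity of the regular n-gon is O(log n). -/

import Mathlib

open Matrix Real


/-- Optional reflection of the integer-indexed angle `k` across center `c`: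
reflect iff the point is on the negative side of the line. -/
noncomputable def rgFold (θ : ℝ) (c k : ℤ) : ℤ :=
  if Real.sin (((k - c : ℤ) : ℝ) * θ) < 0 then 2*c - k else k

/-- interval lengths: `rgL n t = ⌈n / 2^t⌉`. -/
def rgL (n : ℕ) : ℕ → ℕ
  | 0 => n
  | t+1 => (rgL n t + 1) / 2

/-- fold centers. -/
def rgC (n : ℕ) : ℕ → ℤ
  | 0 => 0
  | t+1 => rgC n t + (rgL n (t+1) : ℤ)

/-- iterated folding sequence. -/
noncomputable def rgSeq (θ : ℝ) (n : ℕ) (k : ℤ) : ℕ → ℤ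
  | 0 => k
  | t+1 => rgFold θ (rgC n t) (rgSeq θ n k t)

lemma rgL_pos (n : ℕ) (hn : 1 ≤ n) : ∀ t, 1 ≤ rgL n t := by
  intro t; induction t with
  | zero => exact hn
  | succ t ih => simp only [rgL]; omega

lemma rgL_le (n : ℕ) (hn : 1 ≤ n) : ∀ t, rgL n t ≤ n := by
  intro t; induction t with
  | zero => exact le_refl n
  | succ t ih => simp only [rgL]; omega

lemma rgL_succ_le (n : ℕ) (hn : 3 ≤ n) (t : ℕ) : rgL n (t+1) ≤ n - 1 := by
  have := rgL_le n (by omega) t; simp only [rgL]; omega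

lemma rgL_half (n t : ℕ) : rgL n t ≤ 2 * rgL n (t+1) := by
  simp only [rgL]; omega

lemma rgL_lower (n : ℕ) : ∀ t, n ≤ 2^t * rgL n t := by
  intro t; induction t with
  | zero => simp [rgL]
  | succ t ih =>
      calc n ≤ 2^t * rgL n t := ih
      _ ≤ 2^t * (2 * rgL n (t+1)) := Nat.mul_le_mul_left _ (rgL_half n t)
      _ = 2^(t+1) * rgL n (t+1) := by ring

lemma rgL_upper (n : ℕ) (hn : 1 ≤ n) : ∀ t, 2^t * (rgL n t - 1) < n := by
  intro t; induction t with
  | zero => simp [rgL]; omega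
  | succ t ih =>
      have h2 : 2 * (rgL n (t+1) - 1) ≤ rgL n t - 1 := by simp only [rgL]; omega
      calc 2^(t+1) * (rgL n (t+1) - 1) = 2^t * (2 * (rgL n (t+1) - 1)) := by ring
      _ ≤ 2^t * (rgL n t - 1) := Nat.mul_le_mul_left _ h2
      _ < n := ih

lemma rgL_final (n : ℕ) (hn : 3 ≤ n) : rgL n (Nat.clog 2 n - 1) = 2 := by
  set m := Nat.clog 2 n with hm
  have hmpos : 0 < m := Nat.clog_pos (by norm_num) (by omega)
  have h1 : 2 ^ (m - 1) < n := Nat.pow_pred_clog_lt_self (by norm_num) (by omega)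
  have h2 : n ≤ 2 ^ m := Nat.le_pow_clog (by norm_num) n
  have h3 : n ≤ 2^(m-1) * rgL n (m-1) := rgL_lower n (m-1)
  have h4 : 2^(m-1) * (rgL n (m-1) - 1) < n := rgL_upper n (by omega) (m-1)
  have h5 : 2^m = 2 * 2^(m-1) := by
    conv_lhs => rw [show m = (m-1)+1 by omega]
    rw [pow_succ]; ring
  -- lower: rgL ≥ 2
  have hge : 2 ≤ rgL n (m-1) := by
    by_contra h
    have : rgL n (m-1) ≤ 1 := by omega
    have := h3.trans (Nat.mul_le_mul_left _ this)
    omega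
  -- upper: rgL ≤ 2
  have hle : rgL n (m-1) ≤ 2 := by
    by_contra h
    have h6 : 2 ≤ rgL n (m-1) - 1 := by omega
    have := Nat.mul_le_mul_left (2^(m-1)) h6
    omega
  omega

section trig
variable {n : ℕ}

lemma rg_theta_pos (hn : 1 ≤ n) : 0 < π / n := by
  apply div_pos Real.pi_pos; exact_mod_cast Nat.pos_of_ne_zero (by omega)

lemma rg_sin_nonneg (hn : 1 ≤ n) (v : ℤ) (h0 : 0 ≤ v) (h1 : v ≤ (n:ℤ)) :
    0 ≤ Real.sin ((v:ℝ) * (π / n)) := by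
  have hθ := rg_theta_pos hn
  apply Real.sin_nonneg_of_nonneg_of_le_pi
  · positivity
  · have : ((v:ℝ)) ≤ (n:ℝ) := by exact_mod_cast h1
    have hnn : (0:ℝ) < n := by exact_mod_cast Nat.pos_of_ne_zero (by omega)
    calc (v:ℝ) * (π/n) ≤ (n:ℝ) * (π/n) := by
          apply mul_le_mul_of_nonneg_right this (le_of_lt hθ)
    _ = π := by field_simp

lemma rg_sin_pos (hn : 1 ≤ n) (v : ℤ) (h0 : 0 < v) (h1 : v < (n:ℤ)) :
    0 < Real.sin ((v:ℝ) * (π / n)) := by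
  have hθ := rg_theta_pos hn
  apply Real.sin_pos_of_pos_of_lt_pi
  · have : (0:ℝ) < (v:ℝ) := by exact_mod_cast h0
    positivity
  · have hv : ((v:ℝ)) < (n:ℝ) := by exact_mod_cast h1
    have hnn : (0:ℝ) < n := by exact_mod_cast Nat.pos_of_ne_zero (by omega)
    calc (v:ℝ) * (π/n) < (n:ℝ) * (π/n) := by
          apply mul_lt_mul_of_pos_right hv hθ
    _ = π := by field_simp

/-- reduce the angle mod `2n` inside `sin`. -/
lemma rg_sin_emod (hn : 1 ≤ n) (v : ℤ) :
    Real.sin ((v:ℝ) * (π / n)) = Real.sin (((v % (2*(n:ℤ)) : ℤ):ℝ) * (π / n)) := by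
  have hnn : ((n:ℝ)) ≠ 0 := by
    exact_mod_cast (Nat.pos_of_ne_zero (by omega)).ne'
  have hsplit : (v:ℝ) * (π / n)
      = ((v % (2*(n:ℤ)) : ℤ):ℝ) * (π / n) + ((v / (2*(n:ℤ)) : ℤ):ℝ) * (2 * π) := by
    have h := Int.emod_add_mul_ediv v (2*(n:ℤ))
    have hr : ((v % (2*(n:ℤ)) : ℤ):ℝ) + (2*(n:ℝ)) * ((v / (2*(n:ℤ)) : ℤ):ℝ) = (v:ℝ) := by
      exact_mod_cast congrArg (Int.cast : ℤ → ℝ) h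
    rw [← hr]; field_simp
  rw [hsplit, Real.sin_add_int_mul_two_pi]

lemma rg_cos_emod (hn : 1 ≤ n) (v : ℤ) :
    Real.cos ((v:ℝ) * (π / n)) = Real.cos (((v % (2*(n:ℤ)) : ℤ):ℝ) * (π / n)) := by
  have hnn : ((n:ℝ)) ≠ 0 := by
    exact_mod_cast (Nat.pos_of_ne_zero (by omega)).ne'
  have hsplit : (v:ℝ) * (π / n)
      = ((v % (2*(n:ℤ)) : ℤ):ℝ) * (π / n) + ((v / (2*(n:ℤ)) : ℤ):ℝ) * (2 * π) := by
    have h := Int.emod_add_mul_ediv v (2*(n:ℤ))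
    have hr : ((v % (2*(n:ℤ)) : ℤ):ℝ) + (2*(n:ℝ)) * ((v / (2*(n:ℤ)) : ℤ):ℝ) = (v:ℝ) := by
      exact_mod_cast congrArg (Int.cast : ℤ → ℝ) h
    rw [← hr]; field_simp
  rw [hsplit, Real.cos_add_int_mul_two_pi]

/-- sign of `sin(v θ)` from the residue of `v` mod `2n`. -/
lemma rg_sin_sign_nonneg (hn : 1 ≤ n) (v : ℤ) (h : v % (2*(n:ℤ)) ≤ (n:ℤ)) :
    0 ≤ Real.sin ((v:ℝ) * (π / n)) := by
  rw [rg_sin_emod hn]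
  exact rg_sin_nonneg hn _ (Int.emod_nonneg v (by positivity)) h

lemma rg_sin_sign_neg (hn : 1 ≤ n) (v : ℤ) (h : (n:ℤ) < v % (2*(n:ℤ))) :
    Real.sin ((v:ℝ) * (π / n)) < 0 := by
  rw [rg_sin_emod hn]
  set u := v % (2*(n:ℤ)) with hu
  have hub : u < 2*(n:ℤ) := Int.emod_lt_of_pos v (by positivity)
  -- u ∈ (n, 2n);  sin(uθ) = sin((u-n)θ + π) = -sin((u-n)θ) < 0
  have hkey : ((u:ℝ)) * (π/n) = ((u - (n:ℤ) : ℤ):ℝ) * (π/n) + π := by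
    have hnn : ((n:ℝ)) ≠ 0 := by
      exact_mod_cast (Nat.pos_of_ne_zero (by omega)).ne'
    push_cast; field_simp; ring
  rw [hkey, Real.sin_add_pi]
  have : 0 < Real.sin (((u - (n:ℤ) : ℤ):ℝ) * (π/n)) :=
    rg_sin_pos hn _ (by omega) (by omega)
  linarith

end trig

section fold
variable {n : ℕ}

lemma rgFold_cases (θ : ℝ) (c k : ℤ) :
    (¬ Real.sin (((k - c : ℤ):ℝ) * θ) < 0 ∧ rgFold θ c k = k) ∨
    (Real.sin (((k - c : ℤ):ℝ) * θ) < 0 ∧ rgFold θ c k = 2*c - k) := by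
  unfold rgFold
  by_cases h : Real.sin (((k - c : ℤ):ℝ) * θ) < 0
  · right; exact ⟨h, if_pos h⟩
  · left; exact ⟨h, if_neg h⟩

/-- the new angle offset is `±` the old one, at the real level. -/
lemma rgFold_sin_eq (θ : ℝ) (c k : ℤ) :
    Real.sin (((rgFold θ c k - c : ℤ):ℝ) * θ)
      = |Real.sin (((k - c : ℤ):ℝ) * θ)| := by
  rcases rgFold_cases θ c k with ⟨h, hf⟩ | ⟨h, hf⟩
  · rw [hf, abs_of_nonneg (not_lt.mp h)]
  · rw [hf, show (2*c - k - c : ℤ) = -(k - c) by ring,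
      show ((-(k-c):ℤ):ℝ) = -(((k-c):ℤ):ℝ) by push_cast; ring,
      neg_mul, Real.sin_neg, abs_of_neg h]

lemma rgFold_sin_nonneg (θ : ℝ) (c k : ℤ) :
    0 ≤ Real.sin (((rgFold θ c k - c : ℤ):ℝ) * θ) := by
  rw [rgFold_sin_eq]; exact abs_nonneg _

lemma rgFold_sub_nonneg (θ : ℝ) (c k : ℤ) :
    0 ≤ Real.sin (((rgFold θ c k - c : ℤ):ℝ) * θ) - Real.sin (((k - c : ℤ):ℝ) * θ) := by
  rw [rgFold_sin_eq]; have := le_abs_self (Real.sin (((k - c : ℤ):ℝ) * θ)); linarith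

lemma rgFold_add_nonneg (θ : ℝ) (c k : ℤ) :
    0 ≤ Real.sin (((rgFold θ c k - c : ℤ):ℝ) * θ) + Real.sin (((k - c : ℤ):ℝ) * θ) := by
  rw [rgFold_sin_eq]; have := neg_abs_le (Real.sin (((k - c : ℤ):ℝ) * θ)); linarith

/-- the core step identity at the real level. -/
lemma rg_step_real (θ x y ε δ : ℝ) (hε : ε = 1 ∨ ε = -1) (hδ : δ = 1 ∨ δ = -1) :
    Real.cos (ε*x - δ*y) - Real.cos (x - y)
      = Real.sin (ε*x) * (Real.sin (δ*y) - ε * Real.sin y) := by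
  rcases hε with h | h <;> rcases hδ with h' | h' <;> subst h h' <;>
    simp only [one_mul, neg_one_mul] <;>
    [skip; rw [show x - -y = x + y by ring]; rw [show -x - y = -(x+y) by ring];
      rw [show -x - -y = -(x-y) by ring]] <;>
    simp [Real.cos_add, Real.cos_sub, Real.sin_neg, Real.cos_neg] <;> ring

end fold

lemma rg_step_id (θ : ℝ) (c A B : ℤ) :
    Real.cos (((rgFold θ c A - rgFold θ c B : ℤ):ℝ) * θ) - Real.cos (((A - B : ℤ):ℝ) * θ)
      = Real.sin (((rgFold θ c A - c : ℤ):ℝ) * θ) *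
        (if Real.sin (((A - c : ℤ):ℝ) * θ) < 0
         then Real.sin (((rgFold θ c B - c : ℤ):ℝ) * θ) + Real.sin (((B - c : ℤ):ℝ) * θ)
         else Real.sin (((rgFold θ c B - c : ℤ):ℝ) * θ) - Real.sin (((B - c : ℤ):ℝ) * θ)) := by
  rcases rgFold_cases θ c A with ⟨hA, fA⟩ | ⟨hA, fA⟩ <;>
    rcases rgFold_cases θ c B with ⟨hB, fB⟩ | ⟨hB, fB⟩
  · rw [fA, fB, if_neg hA]; ring
  · rw [fA, fB, if_neg hA,
      show A - (2*c - B) = (A - c) + (B - c) from by ring,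
      show (2*c - B - c : ℤ) = -(B - c) from by ring,
      show (A - B : ℤ) = (A - c) - (B - c) from by ring]
    push_cast
    simp only [neg_mul, add_mul, sub_mul, Real.cos_add, Real.cos_sub, Real.cos_neg,
      Real.sin_neg, Real.sin_add, Real.sin_sub]
    ring
  · rw [fA, fB, if_pos hA,
      show 2*c - A - B = -((A - c) + (B - c)) from by ring,
      show (2*c - A - c : ℤ) = -(A - c) from by ring,
      show (A - B : ℤ) = (A - c) - (B - c) from by ring]
    push_cast
    simp only [neg_mul, add_mul, sub_mul, Real.cos_add, Real.cos_sub, Real.cos_neg,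
      Real.sin_neg, Real.sin_add, Real.sin_sub]
    ring
  · rw [fA, fB, if_pos hA,
      show 2*c - A - (2*c - B) = -((A - c) - (B - c)) from by ring,
      show (2*c - A - c : ℤ) = -(A - c) from by ring,
      show (2*c - B - c : ℤ) = -(B - c) from by ring,
      show (A - B : ℤ) = (A - c) - (B - c) from by ring]
    push_cast
    simp only [neg_mul, add_mul, sub_mul, Real.cos_add, Real.cos_sub, Real.cos_neg,
      Real.sin_neg, Real.sin_add, Real.sin_sub]
    ring

section confine
variable {n : ℕ}

lemma rg_emod_eq {N a r : ℤ} (h : ∃ z, a = r + N * z) (h0 : 0 ≤ r) (h1 : r < N) :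
    a % N = r := by
  obtain ⟨z, rfl⟩ := h
  rw [Int.add_mul_emod_self_left, Int.emod_eq_of_lt h0 h1]

/-- after the first fold (center 0) the angle index lies in `[0, n]` mod `2n`. -/
lemma rgFold0_mem (hn : 1 ≤ n) (k : ℤ) :
    (rgFold (π/n) 0 k - 0) % (2*(n:ℤ)) ≤ (n:ℤ) := by
  have hN : (0:ℤ) < 2*(n:ℤ) := by positivity
  set N : ℤ := 2*(n:ℤ) with hNdef
  have hu0 : 0 ≤ k % N := Int.emod_nonneg k hN.ne'
  have huN : k % N < N := Int.emod_lt_of_pos k hN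
  have hdiv : N * (k / N) + k % N = k := Int.mul_ediv_add_emod k N
  by_cases hu : k % N ≤ (n:ℤ)
  · have hsin : ¬ Real.sin (((k - 0 : ℤ):ℝ) * (π/n)) < 0 := by
      rw [not_lt, show (k - 0 : ℤ) = k from by ring]
      exact rg_sin_sign_nonneg hn k hu
    unfold rgFold
    rw [if_neg hsin, show (k - 0 : ℤ) = k from by ring]
    exact hu
  · push_neg at hu
    have hsin : Real.sin (((k - 0 : ℤ):ℝ) * (π/n)) < 0 := by
      rw [show (k - 0 : ℤ) = k from by ring]
      exact rg_sin_sign_neg hn k hu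
    unfold rgFold
    rw [if_pos hsin, show (2*0 - k - 0 : ℤ) = -k from by ring]
    have : (-k) % N = N - k % N := by
      apply rg_emod_eq ⟨-(k / N) - 1, by linarith⟩ (by omega) (by omega)
    omega

/-- the inductive fold step keeps the angle index in a half-length interval. -/
lemma rgFold_mem (hn : 1 ≤ n) (x : ℤ) (g h : ℕ) (k : ℤ)
    (hg : (g:ℤ) ≤ (n:ℤ)) (hh1 : 1 ≤ h) (hh2 : (h:ℤ) ≤ (n:ℤ) - 1) (hgh : (g:ℤ) ≤ 2*(h:ℤ))
    (hk : (k - x) % (2*(n:ℤ)) ≤ (g:ℤ)) :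
    (rgFold (π/n) (x + h) k - (x + h)) % (2*(n:ℤ)) ≤ (h:ℤ) := by
  have hN : (0:ℤ) < 2*(n:ℤ) := by positivity
  set N : ℤ := 2*(n:ℤ) with hNdef
  set u : ℤ := (k - x) % N with hu
  have hu0 : 0 ≤ u := Int.emod_nonneg _ hN.ne'
  have hdiv : N * ((k - x) / N) + u = k - x := Int.mul_ediv_add_emod (k - x) N
  set q : ℤ := (k - x) / N with hq
  by_cases hcase : (h:ℤ) ≤ u
  · -- no reflection
    have hmod : (k - (x + (h:ℤ))) % N = u - h :=
      rg_emod_eq ⟨q, by linarith⟩ (by omega) (by omega)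
    have hsin : ¬ Real.sin (((k - (x + (h:ℤ)) : ℤ):ℝ) * (π/n)) < 0 := by
      rw [not_lt]
      exact rg_sin_sign_nonneg hn _ (by rw [hmod]; omega)
    unfold rgFold
    rw [if_neg hsin, hmod]
    omega
  · -- reflection
    push_neg at hcase
    have hmod : (k - (x + (h:ℤ))) % N = u - h + N :=
      rg_emod_eq ⟨q - 1, by linarith⟩ (by omega) (by omega)
    have hsin : Real.sin (((k - (x + (h:ℤ)) : ℤ):ℝ) * (π/n)) < 0 := by
      exact rg_sin_sign_neg hn _ (by rw [hmod]; omega)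
    unfold rgFold
    rw [if_pos hsin, show 2*(x + (h:ℤ)) - k - (x + (h:ℤ)) = -(k - (x + (h:ℤ))) from by ring]
    have hmod2 : (-(k - (x + (h:ℤ)))) % N = (h:ℤ) - u :=
      rg_emod_eq ⟨-q, by linarith⟩ (by omega) (by omega)
    omega

end confine

section invariant
variable {n : ℕ}

lemma rgSeq_mem (hn : 3 ≤ n) (k : ℤ) :
    ∀ t, (rgSeq (π/n) n k (t+1) - rgC n t) % (2*(n:ℤ)) ≤ (rgL n t : ℤ) := by
  intro t; induction t with
  | zero =>
      have h0 : rgSeq (π/n) n k 1 = rgFold (π/n) 0 k := by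
        show rgFold (π/n) (rgC n 0) (rgSeq (π/n) n k 0) = _
        rfl
      rw [h0, show rgC n 0 = 0 from rfl, show (rgL n 0 : ℤ) = (n:ℤ) from by rfl]
      exact rgFold0_mem (by omega) k
  | succ t ih =>
      have h0 : rgSeq (π/n) n k (t+2) = rgFold (π/n) (rgC n t + (rgL n (t+1) : ℤ))
          (rgSeq (π/n) n k (t+1)) := rfl
      rw [h0]
      have h1 := rgL_le n (by omega) t
      have h2 := rgL_pos n (by omega) (t+1)
      have h3 := rgL_succ_le n hn t
      have h4 := rgL_half n t
      exact rgFold_mem (by omega) (rgC n t) (rgL n t) (rgL n (t+1)) _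
        (by omega) h2 (by omega) (by omega) ih

lemma rgSeq_parity (θ : ℝ) (k : ℤ) (t : ℕ) : rgSeq θ n k t % 2 = k % 2 := by
  induction t with
  | zero => rfl
  | succ t ih =>
      show rgFold θ (rgC n t) (rgSeq θ n k t) % 2 = k % 2
      unfold rgFold
      split_ifs <;> omega

lemma rg_cos_shift (hn : 1 ≤ n) (v d z : ℤ) (hv : v = d + 2*(n:ℤ)*z) :
    Real.cos ((v:ℝ) * (π/n)) = Real.cos ((d:ℝ) * (π/n)) := by
  have hnn : ((n:ℝ)) ≠ 0 := by
    exact_mod_cast (Nat.pos_of_ne_zero (by omega)).ne'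
  subst hv
  have : (((d + 2*(n:ℤ)*z : ℤ)):ℝ) * (π/n) = (d:ℝ) * (π/n) + (z:ℝ) * (2*π) := by
    push_cast; field_simp
  rw [this]
  exact_mod_cast Real.cos_add_int_mul_two_pi _ z

/-- after all `clog 2 n` folds, an odd and an even start differ by exactly `±1` mod `2n`. -/
lemma rg_final (hn : 3 ≤ n) (ka kb : ℤ) (hpar : (ka - kb) % 2 = 1 ∨ (ka - kb) % 2 = -1) :
    Real.cos (((rgSeq (π/n) n ka (Nat.clog 2 n) - rgSeq (π/n) n kb (Nat.clog 2 n) : ℤ):ℝ)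
      * (π/n)) = Real.cos (π/n) := by
  set m := Nat.clog 2 n with hm
  have hmpos : 0 < m := Nat.clog_pos (by norm_num) (by omega)
  set t := m - 1 with ht
  have hmt : m = t + 1 := by omega
  have hL2 : rgL n t = 2 := rgL_final n hn
  have hN : (0:ℤ) < 2*(n:ℤ) := by positivity
  set N : ℤ := 2*(n:ℤ) with hNdef
  set A : ℤ := rgSeq (π/n) n ka m with hA
  set B : ℤ := rgSeq (π/n) n kb m with hB
  have hua : (A - rgC n t) % N ≤ 2 := by
    rw [hA, hmt]; have := rgSeq_mem hn ka t; rw [hL2] at this; exact_mod_cast this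
  have hub : (B - rgC n t) % N ≤ 2 := by
    rw [hB, hmt]; have := rgSeq_mem hn kb t; rw [hL2] at this; exact_mod_cast this
  have hua0 : 0 ≤ (A - rgC n t) % N := Int.emod_nonneg _ hN.ne'
  have hub0 : 0 ≤ (B - rgC n t) % N := Int.emod_nonneg _ hN.ne'
  have hda : N * ((A - rgC n t) / N) + (A - rgC n t) % N = A - rgC n t :=
    Int.mul_ediv_add_emod _ _
  have hdb : N * ((B - rgC n t) / N) + (B - rgC n t) % N = B - rgC n t :=
    Int.mul_ediv_add_emod _ _
  set d : ℤ := (A - rgC n t) % N - (B - rgC n t) % N with hd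
  have hshift : A - B = d + N * ((A - rgC n t) / N - (B - rgC n t) / N) := by
    rw [hd]; linarith
  -- parity of d
  have hpa : A % 2 = ka % 2 := rgSeq_parity _ ka m
  have hpb : B % 2 = kb % 2 := rgSeq_parity _ kb m
  have hNeven : N * ((A - rgC n t) / N - (B - rgC n t) / N)
      = 2 * ((n:ℤ) * ((A - rgC n t) / N - (B - rgC n t) / N)) := by rw [hNdef]; ring
  have hdodd : d = 1 ∨ d = -1 := by omega
  rw [rg_cos_shift (by omega) (A - B) d _ hshift]
  rcases hdodd with h | h <;> rw [h] <;> push_cast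
  · rw [one_mul]
  · rw [neg_one_mul, Real.cos_neg]
end invariant

/-- the nonnegative left factor entries. -/
noncomputable def rgT (n : ℕ) (a : ℤ) (ℓ : ℕ) : ℝ :=
  if ℓ % 2 = 0
  then (if Real.sin (((rgSeq (π/n) n a (ℓ/2) - rgC n (ℓ/2) : ℤ):ℝ) * (π/n)) < 0 then 0
        else Real.sin (((rgSeq (π/n) n a (ℓ/2+1) - rgC n (ℓ/2) : ℤ):ℝ) * (π/n)))
  else (if Real.sin (((rgSeq (π/n) n a (ℓ/2) - rgC n (ℓ/2) : ℤ):ℝ) * (π/n)) < 0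
        then Real.sin (((rgSeq (π/n) n a (ℓ/2+1) - rgC n (ℓ/2) : ℤ):ℝ) * (π/n)) else 0)

/-- the nonnegative right factor entries. -/
noncomputable def rgUm (n : ℕ) (b : ℤ) (ℓ : ℕ) : ℝ :=
  if ℓ % 2 = 0
  then Real.sin (((rgSeq (π/n) n b (ℓ/2+1) - rgC n (ℓ/2) : ℤ):ℝ) * (π/n))
       - Real.sin (((rgSeq (π/n) n b (ℓ/2) - rgC n (ℓ/2) : ℤ):ℝ) * (π/n))
  else Real.sin (((rgSeq (π/n) n b (ℓ/2+1) - rgC n (ℓ/2) : ℤ):ℝ) * (π/n))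
       + Real.sin (((rgSeq (π/n) n b (ℓ/2) - rgC n (ℓ/2) : ℤ):ℝ) * (π/n))

lemma rgSeq_succ (θ : ℝ) (n : ℕ) (a : ℤ) (t : ℕ) :
    rgSeq θ n a (t+1) = rgFold θ (rgC n t) (rgSeq θ n a t) := rfl

lemma rgT_nonneg (n : ℕ) (a : ℤ) (ℓ : ℕ) : 0 ≤ rgT n a ℓ := by
  unfold rgT
  split_ifs <;> first
    | exact le_refl 0
    | (rw [rgSeq_succ]; exact rgFold_sin_nonneg _ _ _)

lemma rgUm_nonneg (n : ℕ) (b : ℤ) (ℓ : ℕ) : 0 ≤ rgUm n b ℓ := by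
  unfold rgUm
  split_ifs
  · rw [rgSeq_succ]; exact rgFold_sub_nonneg _ _ _
  · rw [rgSeq_succ]; exact rgFold_add_nonneg _ _ _

lemma rg_pair (n : ℕ) (a b : ℤ) (t : ℕ) :
    rgT n a (2*t) * rgUm n b (2*t) + rgT n a (2*t+1) * rgUm n b (2*t+1)
      = Real.cos (((rgSeq (π/n) n a (t+1) - rgSeq (π/n) n b (t+1) : ℤ):ℝ) * (π/n))
        - Real.cos (((rgSeq (π/n) n a t - rgSeq (π/n) n b t : ℤ):ℝ) * (π/n)) := by
  have e1 : (2*t) % 2 = 0 := by omega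
  have e2 : (2*t)/2 = t := by omega
  have e3 : (2*t+1) % 2 = 1 := by omega
  have e4 : (2*t+1)/2 = t := by omega
  unfold rgT rgUm
  rw [e1, e2, e3, e4]
  have hstep := rg_step_id (π/n) (rgC n t) (rgSeq (π/n) n a t) (rgSeq (π/n) n b t)
  rw [rgSeq_succ (π/n) n a t, rgSeq_succ (π/n) n b t, hstep]
  norm_num
  split_ifs with h <;> ring

lemma rg_sum_pair (m : ℕ) (g : ℕ → ℝ) :
    ∑ ℓ ∈ Finset.range (2*m), g ℓ = ∑ t ∈ Finset.range m, (g (2*t) + g (2*t+1)) := by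
  induction m with
  | zero => simp
  | succ m ih =>
      rw [Finset.sum_range_succ, ← ih, show 2*(m+1) = 2*m+1+1 by ring,
        Finset.sum_range_succ, Finset.sum_range_succ]
      ring

/-- The slack matrix of the regular `n`-gon admits a nonnegative factorization of
rank at most `2⌈log₂ n⌉`; consequently its extension complexity is `O(log n)`. -/
theorem stmt2 (n : ℕ) (hn : 3 ≤ n)
    (v : Fin n → (Fin 2 → ℝ))
    (hv : ∀ j : Fin n, v j =
      ![Real.cos (2 * π * ((j.1 : ℝ) + 1) / n), Real.sin (2 * π * ((j.1 : ℝ) + 1) / n)])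
    (a : Fin n → (Fin 2 → ℝ))
    (ha : ∀ i : Fin n, a i =
      ![Real.cos ((2 * ((i.1 : ℝ) + 1) + 1) * π / n), Real.sin ((2 * ((i.1 : ℝ) + 1) + 1) * π / n)])
    (S : Matrix (Fin n) (Fin n) ℝ)
    (hS : ∀ i j, S i j = Real.cos (π / n) - a i ⬝ᵥ v j) :
    ∃ r : ℕ, r ≤ 2 * Nat.clog 2 n ∧
      ∃ (T : Matrix (Fin n) (Fin r) ℝ) (U : Matrix (Fin r) (Fin n) ℝ),
        (∀ i ℓ, 0 ≤ T i ℓ) ∧ (∀ ℓ j, 0 ≤ U ℓ j) ∧ S = T * U := by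
  have hnR : ((n:ℝ)) ≠ 0 := by
    exact_mod_cast (by omega : n ≠ 0)
  set m := Nat.clog 2 n with hm
  refine ⟨2*m, le_refl _, Matrix.of fun i ℓ => rgT n (2*(i.1:ℤ)+3) ℓ.1,
    Matrix.of fun ℓ j => rgUm n (2*(j.1:ℤ)+2) ℓ.1, fun i ℓ => rgT_nonneg _ _ _,
    fun ℓ j => rgUm_nonneg _ _ _, ?_⟩
  ext i j
  rw [hS i j, Matrix.mul_apply]; simp only [Matrix.of_apply]
  -- compute the slack entry as cos θ - cos((A0 - B0)θ)
  have hdot : a i ⬝ᵥ v j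
      = Real.cos ((((2*(i.1:ℤ)+3) - (2*(j.1:ℤ)+2) : ℤ):ℝ) * (π/n)) := by
    rw [ha i, hv j]
    rw [dotProduct, Fin.sum_univ_two]
    simp only [Matrix.cons_val_zero, Matrix.cons_val_one, Matrix.head_cons]
    rw [← Real.cos_sub]
    congr 1
    push_cast
    field_simp
    ring
  rw [hdot]
  -- compute the product entry
  have hsum : (∑ ℓ : Fin (2*m), rgT n (2*(i.1:ℤ)+3) ℓ.1 * rgUm n (2*(j.1:ℤ)+2) ℓ.1)
      = ∑ ℓ ∈ Finset.range (2*m), rgT n (2*(i.1:ℤ)+3) ℓ * rgUm n (2*(j.1:ℤ)+2) ℓ :=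
    Fin.sum_univ_eq_sum_range (fun ℓ => rgT n (2*(i.1:ℤ)+3) ℓ * rgUm n (2*(j.1:ℤ)+2) ℓ) (2*m)
  rw [hsum, rg_sum_pair]
  have hpair : ∀ t ∈ Finset.range m,
      rgT n (2*(i.1:ℤ)+3) (2*t) * rgUm n (2*(j.1:ℤ)+2) (2*t)
        + rgT n (2*(i.1:ℤ)+3) (2*t+1) * rgUm n (2*(j.1:ℤ)+2) (2*t+1)
      = (fun t => Real.cos (((rgSeq (π/n) n (2*(i.1:ℤ)+3) t
            - rgSeq (π/n) n (2*(j.1:ℤ)+2) t : ℤ):ℝ) * (π/n))) (t+1)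
        - (fun t => Real.cos (((rgSeq (π/n) n (2*(i.1:ℤ)+3) t
            - rgSeq (π/n) n (2*(j.1:ℤ)+2) t : ℤ):ℝ) * (π/n))) t :=
    fun t _ => rg_pair n _ _ t
  rw [Finset.sum_congr rfl hpair, Finset.sum_range_sub (fun t => Real.cos (((rgSeq (π/n) n (2*(i.1:ℤ)+3) t
            - rgSeq (π/n) n (2*(j.1:ℤ)+2) t : ℤ):ℝ) * (π/n))) m]
  have hfinal : Real.cos (((rgSeq (π/n) n (2*(i.1:ℤ)+3) m
      - rgSeq (π/n) n (2*(j.1:ℤ)+2) m : ℤ):ℝ) * (π/n)) = Real.cos (π/n) :=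
    rg_final hn _ _ (by omega)
  rw [hfinal]
  have h0a : rgSeq (π/n) n (2*(i.1:ℤ)+3) 0 = 2*(i.1:ℤ)+3 := rfl
  have h0b : rgSeq (π/n) n (2*(j.1:ℤ)+2) 0 = 2*(j.1:ℤ)+2 := rfl
  rw [h0a, h0b]
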